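/- arXiv:1303.1081 — 5 statements merged into one kernel-verified Lean document; each statement's English description precedes it below -/
import Mathlib

section
/- Every β-expansion of a point of I_β is generated by the random β-transformation for some choice of ω: for every x ∈ I_β and every sequence (aₙ)_{n≥1} ∈ {0,1}^ℕ with x = Σ_{n=1}^∞ aₙ β^{−n}, there exists ω ∈ Ω such that dₙ(ω,x) = aₙ for all n ≥ 1, where (dₙ(ω,x)) is the digit sequence defined by x₀ = x, dₙ = 0 if x_{n−1} ∈ L or (x_{n−1} ∈ S and ωₙ = 0), dₙ = 1 otherwise, and xₙ = βx_{n−1} − dₙ. -/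
open MeasureTheory Set Filter
open scoped Classical ENNReal

namespace RandomBeta

noncomputable section

/-- The left shift on `{0,1}^ℕ`. -/
def shift (ω : ℕ → Bool) : ℕ → Bool := fun n => ω (n + 1)

/-- The digit complementation `ω̄ᵢ = 1 - ωᵢ`. -/
def compSeq (ω : ℕ → Bool) : ℕ → Bool := fun n => !(ω n)

/-- The interval `I_β = [0, 1/(β-1)]`. -/
def Ibeta (β : ℝ) : Set ℝ := Set.Icc 0 (1 / (β - 1))

/-- `L = [0, 1/β)`. -/
def Lset (β : ℝ) : Set ℝ := Set.Ico 0 (1 / β)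

/-- `S = [1/β, 1/(β(β-1))]`. -/
def Sset (β : ℝ) : Set ℝ := Set.Icc (1 / β) (1 / (β * (β - 1)))

/-- `R = (1/(β(β-1)), 1/(β-1)]`. -/
def Rset (β : ℝ) : Set ℝ := Set.Ioc (1 / (β * (β - 1))) (1 / (β - 1))

/-- The digit produced at the point `x` when the coin shows `a`:
`0` on `L`, `a` on `S`, `1` on `R`. -/
def digitB (β x : ℝ) (a : Bool) : Bool :=
  if x < 1 / β then false else if x ≤ 1 / (β * (β - 1)) then a else true

/-- One step of the random β-transformation on the second coordinate:
`T₀ x = βx` on `L`, `T_a x` on `S`, `T₁ x = βx - 1` on `R`. -/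
def rStep (β x : ℝ) (a : Bool) : ℝ := β * x - (if digitB β x a then 1 else 0)

/-- The random β-transformation in skew-product form. -/
def Rmap (β : ℝ) (p : (ℕ → Bool) × ℝ) : (ℕ → Bool) × ℝ :=
  (shift p.1, rStep β p.2 (p.1 0))

/-- The random β-transformation `K_β` (shifting `ω` only on `S`). -/
def Kmap (β : ℝ) (p : (ℕ → Bool) × ℝ) : (ℕ → Bool) × ℝ :=
  if p.2 < 1 / β then (p.1, β * p.2)
  else if p.2 ≤ 1 / (β * (β - 1)) then (shift p.1, β * p.2 - (if p.1 0 then 1 else 0))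
  else (p.1, β * p.2 - 1)

/-- `R^n_{β,w}(x)`: the second coordinate of `R_β^n (ω, x)` for any `ω` starting with `w`. -/
def rItin (β x : ℝ) (w : List Bool) : ℝ := w.foldl (rStep β) x

/-- `r(w) = R^n_{β,w}(1)`. -/
def rW (β : ℝ) (w : List Bool) : ℝ := rItin β 1 w

/-- The (unnormalised) density `ρ*_β`. -/
def rhoStar (β x : ℝ) : ℝ :=
  ∑' n : ℕ, ((2 * β) ^ n)⁻¹ * ∑ w : Fin n → Bool,
    ((Set.Icc (0 : ℝ) (rW β (List.ofFn w))).indicator 1 x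
      + (Set.Icc (rItin β (1 / (β - 1) - 1) (List.ofFn w)) (1 / (β - 1))).indicator 1 x)

/-- `m` is the `(1/2, 1/2)` Bernoulli measure on `{0,1}^ℕ`. -/
def IsBernoulliHalf (m : Measure (ℕ → Bool)) : Prop :=
  IsProbabilityMeasure m ∧
    ∀ (n : ℕ) (w : Fin n → Bool), m {ω | ∀ i : Fin n, ω i = w i} = (2 : ℝ≥0∞)⁻¹ ^ n

/-- The probability measure `μ_β` on `I_β` with density `ρ*_β / ∫ ρ*_β` w.r.t. Lebesgue. -/
def muBeta (β : ℝ) : Measure ℝ :=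
  (volume.restrict (Ibeta β)).withDensity
    (fun x => ENNReal.ofReal (rhoStar β x / ∫ y in Ibeta β, rhoStar β y))

/-- `l(w) = Σ ωᵢ 2^(i-1)`. -/
def lVal : List Bool → ℕ
  | [] => 0
  | a :: t => (if a then 1 else 0) + 2 * lVal t

/-- `v(w) = Σ_{k<n} β^(-k) + l(w)/(2β)^n`. -/
def vVal (β : ℝ) (w : List Bool) : ℝ :=
  (∑ k ∈ Finset.range w.length, ((β : ℝ) ^ k)⁻¹) + (lVal w : ℝ) / (2 * β) ^ w.length

/-- The sublevel `E_w = Ω × [0, r(w)] × [v(w), v(w) + (2β)^(-n))` of the tower. -/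
def Eset (β : ℝ) (w : List Bool) : Set ((ℕ → Bool) × ℝ × ℝ) :=
  {p | p.2.1 ∈ Set.Icc 0 (rW β w) ∧
    p.2.2 ∈ Set.Ico (vVal β w) (vVal β w + ((2 * β) ^ w.length)⁻¹)}

/-- The tower `E`. -/
def Etower (β : ℝ) : Set ((ℕ → Bool) × ℝ × ℝ) := ⋃ w : List Bool, Eset β w

/-- The step from `w` to `wa` is of type `T₁`. -/
def stepT1 (β : ℝ) (w : List Bool) (a : Bool) : Prop := digitB β (rW β w) a = true

/-- `C₁(wa) = v(wa) - v(w)/(2β)`. -/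
def C1 (β : ℝ) (w : List Bool) (a : Bool) : ℝ := vVal β (w ++ [a]) - vVal β w / (2 * β)

/-- `C₂(wa) = 1/(2β) + Σ (2β)^(-(m+1)) - v(w)/(2β)`, summing over pairs `(u, b)` with
the step `u → ub` of type `T₁` and `v(u) < v(w)`. -/
def C2 (β : ℝ) (w : List Bool) : ℝ :=
  (2 * β)⁻¹ +
    (∑' u : {q : List Bool × Bool // stepT1 β q.1 q.2 ∧ vVal β q.1 < vVal β w},
      ((2 * β) ^ (u.1.1.length + 1))⁻¹) - vVal β w / (2 * β)

/-- The action of `ψ` on points of the sublevel `E_w`. -/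
def psiAux (β : ℝ) (w : List Bool) (p : (ℕ → Bool) × ℝ × ℝ) : (ℕ → Bool) × ℝ × ℝ :=
  if digitB β (rW β w) (p.1 0) then
    if p.2.1 < 1 / β then (shift p.1, β * p.2.1, p.2.2 / (2 * β) + C2 β w)
    else (shift p.1, β * p.2.1 - 1, p.2.2 / (2 * β) + C1 β w (p.1 0))
  else (shift p.1, β * p.2.1, p.2.2 / (2 * β) + C1 β w (p.1 0))

/-- The tower map `ψ : E → E` (the identity off the tower). -/
def psi (β : ℝ) (p : (ℕ → Bool) × ℝ × ℝ) : (ℕ → Bool) × ℝ × ℝ :=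
  if h : ∃ w : List Bool, p ∈ Eset β w then psiAux β h.choose p else p

/-- The reflection `P(ω, x, y) = (ω̄, 1/(β-1) - x, -y)`. -/
def Pmap (β : ℝ) (p : (ℕ → Bool) × ℝ × ℝ) : (ℕ → Bool) × ℝ × ℝ :=
  (compSeq p.1, 1 / (β - 1) - p.2.1, -p.2.2)

/-- The reflected tower `Ē = P(E)`. -/
def Ebar (β : ℝ) : Set ((ℕ → Bool) × ℝ × ℝ) := Pmap β '' Etower β

/-- The exceptional set `F_w ⊆ E_w` (empty unless `r(w) ∈ R`). -/
def Fset (β : ℝ) (w : List Bool) : Set ((ℕ → Bool) × ℝ × ℝ) :=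
  {p | p ∈ Eset β w ∧ p.1 0 = false ∧ p.2.1 ∈ Sset β ∧ rW β w ∈ Rset β}

/-- The swap map `Q` interchanging `ψ(F_w)` with `ψ(F̄_w̄) = P(ψ(F_w))`. -/
def Qmap (β : ℝ) (p : (ℕ → Bool) × ℝ × ℝ) : (ℕ → Bool) × ℝ × ℝ :=
  if ∃ w : List Bool, p ∈ psi β '' Fset β w then (p.1, p.2.1 + 1, -p.2.2)
  else if ∃ w : List Bool, p ∈ Pmap β '' (psi β '' Fset β w) then (p.1, p.2.1 - 1, -p.2.2)
  else p

/-- `ψ` extended to `E ∪ Ē`, acting by `P ∘ ψ ∘ P⁻¹` on `Ē`. -/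
def psiFull (β : ℝ) (p : (ℕ → Bool) × ℝ × ℝ) : (ℕ → Bool) × ℝ × ℝ :=
  if p ∈ Etower β then psi β p else Pmap β (psi β (Pmap β p))

/-- The corrected tower map `ψ̃ = Q ∘ ψ`. -/
def psiTilde (β : ℝ) : ((ℕ → Bool) × ℝ × ℝ) → ((ℕ → Bool) × ℝ × ℝ) :=
  Qmap β ∘ psiFull β

/-- `h(ω, x, n) = #{0 ≤ i ≤ n-1 : π₂(K_β^i(ω,x)) ∈ S}`. -/
def hCount (β : ℝ) (ω : ℕ → Bool) (x : ℝ) (n : ℕ) : ℕ :=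
  ((Finset.range n).filter (fun i => ((Kmap β)^[i] (ω, x)).2 ∈ Sset β)).card

/-- `π_β(a) = Σ aᵢ β^(-(i+1))`. -/
def piB (β : ℝ) (a : ℕ → Bool) : ℝ :=
  ∑' i : ℕ, (if a i then (1 : ℝ) else 0) * ((β : ℝ) ^ (i + 1))⁻¹

/-- `𝒩ₙ(x; β)`: the number of words of length `n` extendable to a β-expansion of `x`. -/
def Ncount (β x : ℝ) (n : ℕ) : ℕ :=
  {a : Fin n → Bool | ∃ b : ℕ → Bool, (∀ i : Fin n, b i = a i) ∧ x = piB β b}.ncard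

end

/-- every β-expansion of a point `x ∈ I_β` is generated by the random
β-transformation for some choice of `ω`. -/
theorem stmt4 (β : ℝ) (hβ : 1 < β ∧ β < 2) (x : ℝ) (hx : x ∈ Ibeta β) (a : ℕ → Bool)
    (ha : x = ∑' n : ℕ, (if a n then (1 : ℝ) else 0) * ((β : ℝ) ^ (n + 1))⁻¹) :
    ∃ ω : ℕ → Bool, ∀ n : ℕ,
      digitB β ((Rmap β)^[n] (ω, x)).2 (((Rmap β)^[n] (ω, x)).1 0) = a n := by
  obtain ⟨hβ1, hβ2⟩ := hβ
  have hβ0 : (0:ℝ) < β := lt_trans one_pos hβ1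
  have hβne : β ≠ 0 := ne_of_gt hβ0
  have hβs : (0:ℝ) < β - 1 := by linarith
  have hinv1 : β⁻¹ < 1 := by
    rw [inv_lt_one_iff₀]; right; exact hβ1
  have hinv0 : (0:ℝ) ≤ β⁻¹ := inv_nonneg.2 hβ0.le
  set c : ℕ → ℝ := fun n => if a n then 1 else 0 with hc
  have hc01 : ∀ n, 0 ≤ c n ∧ c n ≤ 1 := by
    intro n; simp only [hc]; split <;> norm_num
  set t : ℕ → ℝ := fun n => ∑' i : ℕ, c (n + i) * ((β : ℝ) ^ (i + 1))⁻¹ with ht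
  -- summability
  have hgeom : Summable (fun i : ℕ => (β⁻¹) ^ (i + 1)) := by
    exact ((summable_geometric_of_lt_one hinv0 hinv1).mul_left β⁻¹).congr
      (fun i => by rw [pow_succ']; )
  have hsum : ∀ n, Summable (fun i : ℕ => c (n + i) * ((β : ℝ) ^ (i + 1))⁻¹) := by
    intro n
    apply Summable.of_nonneg_of_le (fun i => ?_) (fun i => ?_) hgeom
    · exact mul_nonneg (hc01 _).1 (inv_nonneg.2 (pow_nonneg hβ0.le _))
    · calc c (n + i) * ((β : ℝ) ^ (i + 1))⁻¹ ≤ 1 * ((β : ℝ) ^ (i + 1))⁻¹ := by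
            apply mul_le_mul_of_nonneg_right (hc01 _).2 (inv_nonneg.2 (pow_nonneg hβ0.le _))
        _ = (β⁻¹) ^ (i + 1) := by rw [one_mul, inv_pow]
  have hgeomsum : ∑' i : ℕ, (β⁻¹) ^ (i + 1) = 1 / (β - 1) := by
    have h1 : (fun i : ℕ => (β⁻¹) ^ (i + 1)) = fun i : ℕ => β⁻¹ * (β⁻¹) ^ i := by
      funext i; rw [pow_succ']
    rw [h1, tsum_mul_left, tsum_geometric_of_lt_one hinv0 hinv1]
    field_simp
  -- bounds
  have ht0 : ∀ n, 0 ≤ t n := by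
    intro n
    exact tsum_nonneg (fun i => mul_nonneg (hc01 _).1 (inv_nonneg.2 (pow_nonneg hβ0.le _)))
  have htub : ∀ n, t n ≤ 1 / (β - 1) := by
    intro n
    rw [ht]
    calc ∑' i : ℕ, c (n + i) * ((β : ℝ) ^ (i + 1))⁻¹ ≤ ∑' i : ℕ, (β⁻¹) ^ (i + 1) := by
          apply Summable.tsum_le_tsum _ (hsum n) hgeom
          intro i
          calc c (n + i) * ((β : ℝ) ^ (i + 1))⁻¹ ≤ 1 * ((β : ℝ) ^ (i + 1))⁻¹ :=
                mul_le_mul_of_nonneg_right (hc01 _).2 (inv_nonneg.2 (pow_nonneg hβ0.le _))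
            _ = (β⁻¹) ^ (i + 1) := by rw [one_mul, inv_pow]
      _ = 1 / (β - 1) := hgeomsum
  -- recursion
  have hrec : ∀ n, t n = c n / β + t (n + 1) / β := by
    intro n
    have h0 := Summable.tsum_eq_zero_add (hsum n)
    show (∑' i : ℕ, c (n + i) * ((β : ℝ) ^ (i + 1))⁻¹)
      = c n / β + (∑' i : ℕ, c (n + 1 + i) * ((β : ℝ) ^ (i + 1))⁻¹) / β
    rw [h0]
    have h2 : ∑' i : ℕ, c (n + (i + 1)) * ((β : ℝ) ^ (i + 1 + 1))⁻¹
        = (∑' i : ℕ, c (n + 1 + i) * ((β : ℝ) ^ (i + 1))⁻¹) * β⁻¹ := by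
      rw [← tsum_mul_right]
      apply tsum_congr
      intro i
      have : n + (i + 1) = n + 1 + i := by ring
      rw [this]
      rw [mul_assoc, ← mul_inv, ← pow_succ]
    rw [h2]
    simp [div_eq_mul_inv]
  have hstep : ∀ n, β * t n - c n = t (n + 1) := by
    intro n
    have := hrec n
    field_simp at this
    linarith
  -- digit lemma
  have hdig : ∀ n, digitB β (t n) (a n) = a n := by
    intro n
    unfold digitB
    by_cases h1 : t n < 1 / β
    · rw [if_pos h1]
      cases han : a n with
      | false => rfl
      | true =>
        exfalso
        have hcn : c n = 1 := by simp [hc, han]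
        have hge : 1 / β ≤ t n := by
          rw [hrec n, hcn]
          have h4 : 0 ≤ t (n + 1) / β := div_nonneg (ht0 _) hβ0.le
          linarith
        linarith
    · rw [if_neg h1]
      by_cases h2 : t n ≤ 1 / (β * (β - 1))
      · rw [if_pos h2]
      · rw [if_neg h2]
        cases han : a n with
        | true => rfl
        | false =>
        exfalso
        have hcn : c n = 0 := by simp [hc, han]
        have hle : t n ≤ 1 / (β * (β - 1)) := by
          rw [hrec n, hcn]
          have h3 := htub (n + 1)
          have h4 : t (n + 1) / β ≤ (1 / (β - 1)) / β := by gcongr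
          have h5 : (1 / (β - 1)) / β = 1 / (β * (β - 1)) := by
            field_simp
          rw [h5] at h4
          simpa using h4
        exact h2 hle
  -- iterate lemma
  have hx0 : x = t 0 := by
    show x = ∑' i : ℕ, c (0 + i) * ((β : ℝ) ^ (i + 1))⁻¹
    rw [ha]
    exact tsum_congr (fun i => by simp [hc])
  have hiter : ∀ n, (Rmap β)^[n] (a, x) = (fun k => a (k + n), t n) := by
    intro n
    induction n with
    | zero =>
      simp [hx0]
    | succ n ih =>
      rw [Function.iterate_succ_apply', ih]
      unfold Rmap rStep shift
      refine Prod.ext ?_ ?_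
      · funext k; simp only; congr 1; ring
      · simp only [Nat.zero_add, hdig n]
        have hif : (if a n = true then (1:ℝ) else 0) = c n := by simp [hc]
        rw [hif]
        exact hstep n
  refine ⟨a, fun n => ?_⟩
  rw [hiter n]
  simpa using hdig n

end RandomBeta
end

section
/- For every k ≥ 1 one has the telescoping mass identity (2β)^{−k} Σ_{w ∈ {0,1}^k} r(w) = 1 − Σ_{n=0}^{k−1} Σ_{(w,a)} (2β)^{−(n+1)}, where the inner sum runs over pairs (w,a) with w ∈ {0,1}ⁿ, a ∈ {0,1}, and the step from w to wa of type T₁. (The left-hand side is the λ̃-measure of the k-th level ⋃_{w ∈ {0,1}^k} E_w of the tower.) -/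
open MeasureTheory Set Filter
open scoped Classical ENNReal

namespace RandomBeta

lemma rW_append_single (β : ℝ) (w : List Bool) (a : Bool) :
    rW β (w ++ [a]) = β * rW β w - (if stepT1 β w a then 1 else 0) := by
  simp only [rW, rItin, List.foldl_append, List.foldl_cons, List.foldl_nil, rStep, stepT1]
  by_cases h : digitB β (List.foldl (rStep β) 1 w) a = true <;> simp [h]

def snocEquivBool (k : ℕ) : (Fin k → Bool) × Bool ≃ (Fin (k + 1) → Bool) where
  toFun p := Fin.snoc p.1 p.2
  invFun w := (fun i => w i.castSucc, w (Fin.last k))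
  left_inv p := by simp
  right_inv w := by
    ext i
    refine Fin.lastCases ?_ (fun j => ?_) i <;> simp

lemma sum_snoc (β : ℝ) (k : ℕ) (f : List Bool → ℝ) :
    ∑ w : Fin (k + 1) → Bool, f (List.ofFn w)
      = ∑ w : Fin k → Bool, ∑ a : Bool, f (List.ofFn w ++ [a]) := by
  calc ∑ w : Fin (k + 1) → Bool, f (List.ofFn w)
      = ∑ p : (Fin k → Bool) × Bool, f (List.ofFn p.1 ++ [p.2]) := by
        refine (Fintype.sum_equiv (snocEquivBool k)
          (fun p => f (List.ofFn p.1 ++ [p.2])) (fun w => f (List.ofFn w)) ?_).symm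
        intro p
        show f (List.ofFn p.1 ++ [p.2]) = f (List.ofFn (Fin.snoc p.1 p.2 : Fin (k+1) → Bool))
        congr 1
        rw [List.ofFn_succ']
        simp [snocEquivBool, List.concat_eq_append]
    _ = ∑ w : Fin k → Bool, ∑ a : Bool, f (List.ofFn w ++ [a]) :=
        Fintype.sum_prod_type fun p => f (List.ofFn p.1 ++ [p.2])

lemma stmt6_aux (β : ℝ) (hβ : 1 < β ∧ β < 2) (k : ℕ) :
    ((2 * β) ^ k)⁻¹ * ∑ w : Fin k → Bool, rW β (List.ofFn w)
      = 1 - ∑ n ∈ Finset.range k, ∑ w : Fin n → Bool, ∑ a : Bool,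
          (if stepT1 β (List.ofFn w) a then ((2 * β) ^ (n + 1))⁻¹ else 0) := by
  have hb : (2 * β) ≠ 0 := by nlinarith [hβ.1]
  have hbk : ∀ n : ℕ, ((2 * β) : ℝ) ^ n ≠ 0 := fun n => pow_ne_zero _ hb
  induction k with
  | zero => simp [rW, rItin]
  | succ k ih =>
    rw [Finset.sum_range_succ, sum_snoc β k (rW β)]
    have hw : ∀ w : Fin k → Bool,
        ∑ a : Bool, rW β (List.ofFn w ++ [a])
          = 2 * β * rW β (List.ofFn w) - (2 * β) ^ (k + 1) * ∑ a : Bool,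
              (if stepT1 β (List.ofFn w) a then ((2 * β) ^ (k + 1))⁻¹ else 0) := by
      intro w
      rw [Fintype.sum_bool, Fintype.sum_bool, rW_append_single, rW_append_single]
      split_ifs <;> simp only [mul_add, mul_zero, add_zero, zero_add, mul_inv_cancel₀ (hbk _)] <;> ring
    have step : ∑ w : Fin k → Bool, ∑ a : Bool, rW β (List.ofFn w ++ [a])
        = 2 * β * ∑ w : Fin k → Bool, rW β (List.ofFn w)
          - (2 * β) ^ (k + 1) * ∑ w : Fin k → Bool, ∑ a : Bool,
              (if stepT1 β (List.ofFn w) a then ((2 * β) ^ (k + 1))⁻¹ else 0) := by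
      rw [Finset.sum_congr rfl (fun w _ => hw w), Finset.sum_sub_distrib,
        ← Finset.mul_sum, ← Finset.mul_sum]
    rw [step, mul_sub]
    have h1 : ((2 * β) ^ (k + 1))⁻¹ * (2 * β * ∑ w : Fin k → Bool, rW β (List.ofFn w))
        = ((2 * β) ^ k)⁻¹ * ∑ w : Fin k → Bool, rW β (List.ofFn w) := by
      rw [pow_succ]
      field_simp
      rw [mul_comm β, mul_div_cancel_right₀ _ (show β ≠ 0 by linarith [hβ.1])]
    have h2 : ((2 * β) ^ (k + 1))⁻¹ * ((2 * β) ^ (k + 1) * ∑ w : Fin k → Bool, ∑ a : Bool,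
          (if stepT1 β (List.ofFn w) a then ((2 * β) ^ (k + 1))⁻¹ else 0))
        = ∑ w : Fin k → Bool, ∑ a : Bool,
          (if stepT1 β (List.ofFn w) a then ((2 * β) ^ (k + 1))⁻¹ else 0) := by
      rw [← mul_assoc, inv_mul_cancel₀ (hbk _), one_mul]
    rw [h1, h2, ih]
    ring

/-- the telescoping mass identity
`(2β)^{-k} Σ_{w ∈ {0,1}^k} r(w) = 1 - Σ_{n<k} Σ_{(w,a) : T₁-step} (2β)^{-(n+1)}`. -/
theorem stmt6 (β : ℝ) (hβ : 1 < β ∧ β < 2) (k : ℕ) (hk : 1 ≤ k) :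
    ((2 * β) ^ k)⁻¹ * ∑ w : Fin k → Bool, rW β (List.ofFn w)
      = 1 - ∑ n ∈ Finset.range k, ∑ w : Fin n → Bool, ∑ a : Bool,
          (if stepT1 β (List.ofFn w) a then ((2 * β) ^ (n + 1))⁻¹ else 0) :=
  stmt6_aux β hβ k

end RandomBeta
end

section
/- The total mass of the strips returned to the base of the tower equals one: Σ_{n=0}^∞ Σ_{(w,a)} (2β)^{−(n+1)} = 1, where the inner sum runs over pairs (w,a) with w ∈ {0,1}ⁿ, a ∈ {0,1}, and the step from w to wa of type T₁. -/
open MeasureTheory Set Filter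
open scoped Classical ENNReal

namespace RandomBeta

/-- Auxiliary partial sums for stmt7. -/
noncomputable def Ssum (β : ℝ) (n : ℕ) : ℝ := ∑ w : Fin n → Bool, rW β (List.ofFn w)

/-- the total mass of the strips returned to the base equals one:
`Σ_{n≥0} Σ_{(w,a) : w ∈ {0,1}ⁿ, step w→wa of type T₁} (2β)^{-(n+1)} = 1`. -/
theorem stmt7 (β : ℝ) (hβ : 1 < β ∧ β < 2) :
    ∑' n : ℕ, ∑ w : Fin n → Bool, ∑ a : Bool,
      (if stepT1 β (List.ofFn w) a then ((2 * β) ^ (n + 1))⁻¹ else 0) = 1 := by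
  obtain ⟨hβ1, hβ2⟩ := hβ
  have hβ0 : (0:ℝ) < β := by linarith
  have hβ1' : (0:ℝ) < β - 1 := by linarith
  set c : ℝ := 1 / (β - 1) with hc
  have hc1 : 1 ≤ c := by rw [hc, le_div_iff₀ hβ1']; linarith
  have key1 : β * (1/β) = 1 := by field_simp
  have key2 : β * (1/(β*(β-1))) = c := by rw [hc]; field_simp
  have key3 : β * c = c + 1 := by rw [hc]; field_simp; ring
  -- invariance of I_β under rStep
  have hstep : ∀ x a, 0 ≤ x → x ≤ c → 0 ≤ rStep β x a ∧ rStep β x a ≤ c := by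
    intro x a hx0 hxc
    unfold rStep digitB
    rcases lt_or_ge x (1/β) with h1 | h1
    · simp only [if_pos h1]
      have : β * x < 1 := by calc β * x < β * (1/β) := by exact mul_lt_mul_of_pos_left h1 hβ0
                                  _ = 1 := key1
      constructor <;> simp <;> [positivity; linarith]
    · simp only [if_neg (not_lt.mpr h1)]
      have hx1 : 1 ≤ β * x := by
        calc (1:ℝ) = β * (1/β) := key1.symm
          _ ≤ β * x := mul_le_mul_of_nonneg_left h1 hβ0.le
      rcases le_or_gt x (1/(β*(β-1))) with h2 | h2
      · simp only [if_pos h2]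
        have hbc : β * x ≤ c := by
          calc β * x ≤ β * (1/(β*(β-1))) := mul_le_mul_of_nonneg_left h2 hβ0.le
            _ = c := key2
        cases a <;> simp <;> constructor <;> linarith
      · simp only [if_neg (not_le.mpr h2)]
        have hbc : c ≤ β * x := by
          calc c = β * (1/(β*(β-1))) := key2.symm
            _ ≤ β * x := mul_le_mul_of_nonneg_left h2.le hβ0.le
        have hbc2 : β * x ≤ c + 1 := by
          calc β * x ≤ β * c := mul_le_mul_of_nonneg_left hxc hβ0.le
            _ = c + 1 := key3
        simp; constructor <;> linarith
  have hitin : ∀ (w : List Bool) (x : ℝ), 0 ≤ x → x ≤ c →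
      0 ≤ rItin β x w ∧ rItin β x w ≤ c := by
    intro w
    induction w with
    | nil => intro x h0 h1; exact ⟨h0, h1⟩
    | cons a t ih =>
      intro x h0 h1
      have h := hstep x a h0 h1
      exact ih (rStep β x a) h.1 h.2
  have hrW : ∀ w : List Bool, 0 ≤ rW β w ∧ rW β w ≤ c :=
    fun w => hitin w 1 zero_le_one hc1
  have hb0 : (0:ℝ) < 2 * β := by linarith
  -- recursion for Ssum
  have happ : ∀ (w : List Bool) (a : Bool),
      rW β (w ++ [a]) = rStep β (rW β w) a := by
    intro w a; simp [rW, rItin, List.foldl_append]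
  have hS0 : Ssum β 0 = 1 := by
    simp [Ssum, rW, rItin]
  have hSsucc : ∀ n : ℕ, Ssum β (n+1) =
      ∑ w : Fin n → Bool, ∑ a : Bool, rW β (List.ofFn w ++ [a]) := by
    intro n
    rw [Ssum, ← Fintype.sum_equiv (Fin.snocEquiv (fun _ => Bool))
        (fun p => rW β (List.ofFn (Fin.snoc p.2 p.1 : Fin (n+1) → Bool)))
        (fun f => rW β (List.ofFn f)) (fun p => rfl)]
    rw [Fintype.sum_prod_type]
    rw [Finset.sum_comm]
    apply Finset.sum_congr rfl
    intro w _
    apply Finset.sum_congr rfl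
    intro a _
    congr 1
    rw [List.ofFn_succ']
    simp [List.concat_eq_append, Fin.snoc_castSucc]
  -- the summand as telescoping difference
  have hterm : ∀ n : ℕ,
      (∑ w : Fin n → Bool, ∑ a : Bool,
        (if stepT1 β (List.ofFn w) a then ((2 * β) ^ (n + 1))⁻¹ else 0))
      = Ssum β n * ((2*β) ^ n)⁻¹ - Ssum β (n+1) * ((2*β) ^ (n+1))⁻¹ := by
    intro n
    have hpt : ∀ (w : Fin n → Bool) (a : Bool),
        (if stepT1 β (List.ofFn w) a then ((2 * β) ^ (n + 1))⁻¹ else 0)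
        = ((2*β)^(n+1))⁻¹ * (β * rW β (List.ofFn w) - rW β (List.ofFn w ++ [a])) := by
      intro w a
      rw [happ]
      by_cases h : digitB β (rW β (List.ofFn w)) a <;>
        simp [stepT1, h, rStep] <;> ring
    have hsum : ∀ w : Fin n → Bool,
        (∑ a : Bool, (if stepT1 β (List.ofFn w) a then ((2 * β) ^ (n + 1))⁻¹ else 0))
        = ((2*β)^(n+1))⁻¹ * (2 * β * rW β (List.ofFn w)
            - ∑ a : Bool, rW β (List.ofFn w ++ [a])) := by
      intro w
      simp only [hpt, Fintype.sum_bool]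
      ring
    simp only [hsum]
    have hbn : ((2*β:ℝ)^(n+1))⁻¹ * (2*β) = ((2*β)^n)⁻¹ := by
      rw [pow_succ]; field_simp
    have hexp : ∀ x : Fin n → Bool,
        ((2*β)^(n+1))⁻¹ * (2 * β * rW β (List.ofFn x) - ∑ a : Bool, rW β (List.ofFn x ++ [a]))
        = rW β (List.ofFn x) * ((2*β)^n)⁻¹
          - ((2*β)^(n+1))⁻¹ * ∑ a : Bool, rW β (List.ofFn x ++ [a]) := by
      intro x
      rw [mul_sub]; congr 1; rw [← mul_assoc, hbn, mul_comm]
    simp only [hexp]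
    rw [Finset.sum_sub_distrib, ← Finset.sum_mul, ← Finset.mul_sum, ← hSsucc]
    have hid : (∑ x : Fin n → Bool, rW β (List.ofFn x)) = Ssum β n := rfl
    rw [hid]; ring
  -- nonnegativity of terms
  have hnn : ∀ n : ℕ, 0 ≤ ∑ w : Fin n → Bool, ∑ a : Bool,
      (if stepT1 β (List.ofFn w) a then ((2 * β) ^ (n + 1))⁻¹ else 0) := by
    intro n
    apply Finset.sum_nonneg; intro w _
    apply Finset.sum_nonneg; intro a _
    positivity
  -- limit of the remainder
  have hSb : ∀ n : ℕ, Ssum β n * ((2*β)^n)⁻¹ ≤ c * (β⁻¹)^n := by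
    intro n
    have hcard : Ssum β n ≤ (2:ℝ)^n * c := by
      have := Finset.sum_le_card_nsmul Finset.univ (fun w : Fin n → Bool => rW β (List.ofFn w))
        c (fun w _ => (hrW _).2)
      simp only [Finset.card_univ, nsmul_eq_mul] at this
      calc Ssum β n ≤ (Fintype.card (Fin n → Bool) : ℝ) * c := this
        _ = (2:ℝ)^n * c := by
            rw [Fintype.card_fun]; simp
    calc Ssum β n * ((2*β)^n)⁻¹ ≤ (2:ℝ)^n * c * ((2*β)^n)⁻¹ := by
          apply mul_le_mul_of_nonneg_right hcard (by positivity)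
      _ = c * (β⁻¹)^n := by
          rw [mul_pow]
          field_simp
          ring_nf; rw [← mul_pow, mul_inv_cancel₀ hβ0.ne', one_pow]
  have hSnn : ∀ n, 0 ≤ Ssum β n * ((2*β)^n)⁻¹ := by
    intro n
    apply mul_nonneg
    · exact Finset.sum_nonneg fun w _ => (hrW _).1
    · positivity
  have hlim : Filter.Tendsto (fun n => Ssum β n * ((2*β)^n)⁻¹) atTop (nhds 0) := by
    apply squeeze_zero hSnn hSb
    have h1 : β⁻¹ < 1 := inv_lt_one_of_one_lt₀ hβ1
    have h2 := tendsto_pow_atTop_nhds_zero_of_lt_one (by positivity : (0:ℝ) ≤ β⁻¹) h1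
    simpa using h2.const_mul c
  have hps : ∀ N, (∑ n ∈ Finset.range N, ∑ w : Fin n → Bool, ∑ a : Bool,
      (if stepT1 β (List.ofFn w) a then ((2 * β) ^ (n + 1))⁻¹ else 0))
      = 1 - Ssum β N * ((2*β)^N)⁻¹ := by
    intro N
    rw [Finset.sum_congr rfl (fun n _ => hterm n),
      Finset.sum_range_sub' (fun n => Ssum β n * ((2*β)^n)⁻¹)]
    simp [hS0]
  have hHasSum : HasSum (fun n => ∑ w : Fin n → Bool, ∑ a : Bool,
      (if stepT1 β (List.ofFn w) a then ((2 * β) ^ (n + 1))⁻¹ else 0)) 1 := by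
    rw [hasSum_iff_tendsto_nat_of_nonneg hnn]
    simp only [hps]
    have h3 := hlim.const_sub 1
    simpa using h3
  exact hHasSum.tsum_eq

end RandomBeta
end

section
/- The upward branches of ψ are bijections onto the next sublevel: for every word w ∈ {0,1}ⁿ and digit a ∈ {0,1}, if the step from w to wa is of type T₀ then ψ restricted to {(ω′,x,y) ∈ E_w : ω′₁ = a} is a bijection onto E_{wa}, and if the step is of type T₁ then ψ restricted to {(ω′,x,y) ∈ E_w : ω′₁ = a, x ∈ S ∪ R} is a bijection onto E_{wa}. -/
open MeasureTheory Set Filter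
open scoped Classical ENNReal

namespace RandomBeta

section Aux

variable {β : ℝ}

/-! ### Arithmetic of `lVal`, `vVal` and disjointness of the sublevels -/

noncomputable def sN (β : ℝ) (n : ℕ) : ℝ := ∑ k ∈ Finset.range n, ((β : ℝ) ^ k)⁻¹

lemma vVal_eq (β : ℝ) (w : List Bool) :
    vVal β w = sN β w.length + (lVal w : ℝ) / (2 * β) ^ w.length := rfl

lemma lVal_lt (w : List Bool) : lVal w < 2 ^ w.length := by
  induction w with
  | nil => simp [lVal]
  | cons b t ih =>
    rw [List.length_cons, pow_succ]
    obtain ⟨m, hm⟩ : ∃ m, 2 ^ t.length = m := ⟨_, rfl⟩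
    rw [hm] at ih ⊢
    cases b <;> simp [lVal] <;> omega

lemma lVal_inj : ∀ (w w' : List Bool), w.length = w'.length → lVal w = lVal w' → w = w'
  | [], [], _, _ => rfl
  | [], _ :: _, hl, _ => by simp at hl
  | _ :: _, [], hl, _ => by simp at hl
  | b :: t, b' :: t', hl, hv => by
    simp only [List.length_cons, add_left_inj] at hl
    have hbt : b = b' ∧ lVal t = lVal t' := by
      cases b <;> cases b' <;> simp [lVal] at hv ⊢ <;> omega
    rw [hbt.1, lVal_inj t t' hl hbt.2]

lemma sN_succ (β : ℝ) (n : ℕ) : sN β (n + 1) = sN β n + ((β : ℝ) ^ n)⁻¹ :=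
  Finset.sum_range_succ _ n

lemma sN_mono (hβ1 : 1 < β) {n m : ℕ} (h : n ≤ m) : sN β n ≤ sN β m := by
  have hb0 : (0 : ℝ) < β := by linarith
  unfold sN
  refine Finset.sum_le_sum_of_subset_of_nonneg (Finset.range_subset_range.mpr h) ?_
  intro i _ _
  positivity

lemma le_vVal (hβ1 : 1 < β) (w : List Bool) : sN β w.length ≤ vVal β w := by
  have hb0 : (0 : ℝ) < β := by linarith
  rw [vVal_eq]
  have h0 : 0 ≤ (lVal w : ℝ) / (2 * β) ^ w.length := by positivity
  linarith

lemma vVal_add_le (hβ1 : 1 < β) (w : List Bool) :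
    vVal β w + ((2 * β) ^ w.length)⁻¹ ≤ sN β (w.length + 1) := by
  have hb0 : (0 : ℝ) < β := by linarith
  rw [vVal_eq, sN_succ]
  have h2 : (0 : ℝ) < (2 * β) ^ w.length := by positivity
  have hl : (lVal w : ℝ) + 1 ≤ 2 ^ w.length := by
    have := lVal_lt w
    have : (lVal w : ℕ) + 1 ≤ 2 ^ w.length := this
    exact_mod_cast this
  have key : ((lVal w : ℝ) + 1) / (2 * β) ^ w.length ≤ ((β : ℝ) ^ w.length)⁻¹ := by
    rw [mul_pow, inv_eq_one_div, div_le_div_iff₀ (by positivity) (by positivity)]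
    have hbp : (0 : ℝ) < (β : ℝ) ^ w.length := by positivity
    nlinarith [hbp, hl]
  have hsplit : (lVal w : ℝ) / (2 * β) ^ w.length + ((2 * β) ^ w.length)⁻¹
      = ((lVal w : ℝ) + 1) / (2 * β) ^ w.length := by
    field_simp
  linarith

lemma len_aux (hβ1 : 1 < β) {w w' : List Bool} {y : ℝ}
    (hy : y ∈ Set.Ico (vVal β w) (vVal β w + ((2 * β) ^ w.length)⁻¹))
    (hy' : y ∈ Set.Ico (vVal β w') (vVal β w' + ((2 * β) ^ w'.length)⁻¹))
    (hlt : w.length < w'.length) : False := by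
  have h1 : vVal β w + ((2 * β) ^ w.length)⁻¹ ≤ vVal β w' :=
    le_trans (vVal_add_le hβ1 w) (le_trans (sN_mono hβ1 hlt) (le_vVal hβ1 w'))
  have := hy.2
  have := hy'.1
  linarith

lemma lv_aux (hβ1 : 1 < β) {w w' : List Bool} {y : ℝ}
    (hy : y ∈ Set.Ico (vVal β w) (vVal β w + ((2 * β) ^ w.length)⁻¹))
    (hy' : y ∈ Set.Ico (vVal β w') (vVal β w' + ((2 * β) ^ w'.length)⁻¹))
    (hlen : w.length = w'.length) (hlt : lVal w < lVal w') : False := by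
  have hb0 : (0 : ℝ) < β := by linarith
  have h2 : (0 : ℝ) < (2 * β) ^ w.length := by positivity
  have hll : (lVal w : ℝ) + 1 ≤ (lVal w' : ℝ) := by exact_mod_cast hlt
  have hkey : vVal β w + ((2 * β) ^ w.length)⁻¹ ≤ vVal β w' := by
    rw [vVal_eq, vVal_eq, ← hlen]
    have hd : ((lVal w : ℝ) + 1) / (2 * β) ^ w.length ≤ (lVal w' : ℝ) / (2 * β) ^ w.length := by
      gcongr
    have hsplit : (lVal w : ℝ) / (2 * β) ^ w.length + ((2 * β) ^ w.length)⁻¹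
        = ((lVal w : ℝ) + 1) / (2 * β) ^ w.length := by field_simp
    linarith
  have := hy.2
  have := hy'.1
  linarith

lemma Eset_unique (hβ1 : 1 < β) {p : (ℕ → Bool) × ℝ × ℝ} {w w' : List Bool}
    (h : p ∈ Eset β w) (h' : p ∈ Eset β w') : w = w' := by
  have hy : p.2.2 ∈ Set.Ico (vVal β w) (vVal β w + ((2 * β) ^ w.length)⁻¹) := h.2
  have hy' : p.2.2 ∈ Set.Ico (vVal β w') (vVal β w' + ((2 * β) ^ w'.length)⁻¹) := h'.2
  have hlen : w.length = w'.length := by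
    rcases lt_trichotomy w.length w'.length with hl | hl | hl
    · exact absurd (len_aux hβ1 hy hy' hl) (by simp)
    · exact hl
    · exact absurd (len_aux hβ1 hy' hy hl) (by simp)
  have hl : lVal w = lVal w' := by
    rcases lt_trichotomy (lVal w) (lVal w') with hl | hl | hl
    · exact absurd (lv_aux hβ1 hy hy' hlen hl) (by simp)
    · exact hl
    · exact absurd (lv_aux hβ1 hy' hy hlen.symm hl) (by simp)
  exact lVal_inj w w' hlen hl

lemma psi_eq (hβ1 : 1 < β) {p : (ℕ → Bool) × ℝ × ℝ} {w : List Bool}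
    (hp : p ∈ Eset β w) : psi β p = psiAux β w p := by
  have hex : ∃ u : List Bool, p ∈ Eset β u := ⟨w, hp⟩
  simp only [psi, dif_pos hex]
  rw [Eset_unique hβ1 hex.choose_spec hp]

/-! ### `rW` stays in `I_β` -/

lemma rW_append (β : ℝ) (w : List Bool) (a : Bool) :
    rW β (w ++ [a]) = rStep β (rW β w) a := by
  simp [rW, rItin, List.foldl_append]

lemma rStep_mem (hβ1 : 1 < β) (hβ2 : β < 2) {x : ℝ}
    (hx : x ∈ Set.Icc (0 : ℝ) (1 / (β - 1))) (a : Bool) :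
    rStep β x a ∈ Set.Icc (0 : ℝ) (1 / (β - 1)) := by
  have hb0 : (0 : ℝ) < β := by linarith
  have hbm : (0 : ℝ) < β - 1 := by linarith
  obtain ⟨hx0, hx1⟩ := hx
  have hu : (β - 1) * (1 / (β - 1)) = 1 := by field_simp
  have h1b : (1 : ℝ) ≤ 1 / (β - 1) := by rw [le_div_iff₀ hbm]; nlinarith
  have hc : β * (1 / (β * (β - 1))) = 1 / (β - 1) := by field_simp; try ring
  rcases lt_or_ge x (1 / β) with hL | hL
  · have hd : digitB β x a = false := by unfold digitB; rw [if_pos hL]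
    rw [rStep, hd]
    simp only [Bool.false_eq_true, if_false, sub_zero]
    constructor
    · positivity
    · have hxx : β * x < β * (1 / β) := by gcongr
      have : β * (1 / β) = 1 := by field_simp
      linarith
  · have hbx : 1 ≤ β * x := by
      have : β * (1 / β) ≤ β * x := by gcongr
      have h1 : β * (1 / β) = 1 := by field_simp
      linarith
    rcases le_or_gt x (1 / (β * (β - 1))) with hS | hR
    · have hbx2 : β * x ≤ 1 / (β - 1) := by
        have : β * x ≤ β * (1 / (β * (β - 1))) := by gcongr
        linarith [hc]
      cases a
      · have hd : digitB β x false = false := by unfold digitB; rw [if_neg (not_lt.mpr hL), if_pos hS]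
        rw [rStep, hd]
        simp only [Bool.false_eq_true, if_false, sub_zero]
        constructor
        · positivity
        · exact hbx2
      · have hd : digitB β x true = true := by unfold digitB; rw [if_neg (not_lt.mpr hL), if_pos hS]
        rw [rStep, hd]
        simp only [if_true]
        constructor
        · linarith
        · linarith
    · have hd : digitB β x a = true := by unfold digitB; rw [if_neg (not_lt.mpr hL), if_neg (not_le.mpr hR)]
      rw [rStep, hd]
      simp only [if_true]
      have hbx2 : β * x ≤ β * (1 / (β - 1)) := by gcongr
      have hβu : β * (1 / (β - 1)) = 1 / (β - 1) + 1 := by field_simp; try ring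
      constructor
      · linarith
      · linarith

lemma rW_mem (hβ1 : 1 < β) (hβ2 : β < 2) (w : List Bool) :
    rW β w ∈ Set.Icc (0 : ℝ) (1 / (β - 1)) := by
  have hbm : (0 : ℝ) < β - 1 := by linarith
  have h1b : (1 : ℝ) ≤ 1 / (β - 1) := by rw [le_div_iff₀ hbm]; nlinarith
  have key : ∀ (w : List Bool) (x : ℝ), x ∈ Set.Icc (0 : ℝ) (1 / (β - 1)) →
      List.foldl (rStep β) x w ∈ Set.Icc (0 : ℝ) (1 / (β - 1)) := by
    intro w
    induction w with
    | nil => intro x hx; simpa using hx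
    | cons b t ih =>
      intro x hx
      rw [List.foldl_cons]
      exact ih _ (rStep_mem hβ1 hβ2 hx b)
  exact key w 1 ⟨zero_le_one, h1b⟩

lemma SR_eq (hβ1 : 1 < β) (hβ2 : β < 2) :
    Sset β ∪ Rset β = Set.Icc (1 / β) (1 / (β - 1)) := by
  have hb0 : (0 : ℝ) < β := by linarith
  have hbm : (0 : ℝ) < β - 1 := by linarith
  rw [Sset, Rset, Set.Icc_union_Ioc_eq_Icc]
  · rw [div_le_div_iff₀ hb0 (by positivity)]
    nlinarith
  · rw [div_le_div_iff₀ (by positivity : (0:ℝ) < β * (β - 1)) hbm]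
    nlinarith

/-! ### `consB` -/

def consB (a : Bool) (ω : ℕ → Bool) : ℕ → Bool
  | 0 => a
  | n + 1 => ω n

lemma shift_consB (a : Bool) (ω : ℕ → Bool) : shift (consB a ω) = ω := rfl

lemma consB_shift {a : Bool} {ω : ℕ → Bool} (h : ω 0 = a) : consB a (shift ω) = ω := by
  funext n
  cases n with
  | zero => exact h.symm
  | succ k => rfl

lemma consB_zero (a : Bool) (ω : ℕ → Bool) : consB a ω 0 = a := rfl

end Aux

/-- the upward branches of `ψ` are bijections onto the next sublevel: if the step
`w → wa` is of type `T₀` then `ψ` maps `{(ω',x,y) ∈ E_w : ω'₁ = a}` bijectively onto `E_{wa}`,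
and if it is of type `T₁` then `ψ` maps `{(ω',x,y) ∈ E_w : ω'₁ = a, x ∈ S ∪ R}` bijectively
onto `E_{wa}`. -/
theorem stmt8 (β : ℝ) (hβ : 1 < β ∧ β < 2) (w : List Bool) (a : Bool) :
    (¬ stepT1 β w a →
      Set.BijOn (psi β) {p | p ∈ Eset β w ∧ p.1 0 = a} (Eset β (w ++ [a]))) ∧
    (stepT1 β w a →
      Set.BijOn (psi β) {p | p ∈ Eset β w ∧ p.1 0 = a ∧ p.2.1 ∈ Sset β ∪ Rset β}
        (Eset β (w ++ [a]))) := by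
  obtain ⟨hβ1, hβ2⟩ := hβ
  have hb0 : (0 : ℝ) < β := by linarith
  have h2b : (0 : ℝ) < 2 * β := by linarith
  have hbm : (0 : ℝ) < β - 1 := by linarith
  have hv' : vVal β (w ++ [a]) = vVal β w / (2 * β) + C1 β w a := by rw [C1]; ring
  have hlen' : (w ++ [a]).length = w.length + 1 := by simp
  have htt : ((2 * β) ^ (w.length + 1))⁻¹ = ((2 * β) ^ w.length)⁻¹ / (2 * β) := by
    rw [pow_succ, mul_inv, div_eq_mul_inv]
  have htpos : (0 : ℝ) < ((2 * β) ^ w.length)⁻¹ := by positivity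
  constructor
  · -- type T₀
    intro h
    have hd : digitB β (rW β w) a = false := Bool.eq_false_iff.mpr h
    have hrwa : rW β (w ++ [a]) = β * rW β w := by
      rw [rW_append, rStep, hd]; simp
    set g : (ℕ → Bool) × ℝ × ℝ → (ℕ → Bool) × ℝ × ℝ :=
      fun q => (consB a q.1, q.2.1 / β, (q.2.2 - C1 β w a) * (2 * β)) with hg
    have hpsi : ∀ p : (ℕ → Bool) × ℝ × ℝ, p ∈ Eset β w → p.1 0 = a →
        psi β p = (shift p.1, β * p.2.1, p.2.2 / (2 * β) + C1 β w a) := by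
      intro p hp hpa
      rw [psi_eq hβ1 hp]
      unfold psiAux
      rw [hpa, hd]
      simp
    have hmapsF : Set.MapsTo (psi β) {p | p ∈ Eset β w ∧ p.1 0 = a} (Eset β (w ++ [a])) := by
      rintro p ⟨hp, hpa⟩
      have hx0 : (0 : ℝ) ≤ p.2.1 := hp.1.1
      have hx1 : p.2.1 ≤ rW β w := hp.1.2
      have hy0 : vVal β w ≤ p.2.2 := hp.2.1
      have hy1 : p.2.2 < vVal β w + ((2 * β) ^ w.length)⁻¹ := hp.2.2
      rw [hpsi p hp hpa]
      refine ⟨⟨?_, ?_⟩, ?_, ?_⟩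
      · exact mul_nonneg hb0.le hx0
      · rw [hrwa]; exact mul_le_mul_of_nonneg_left hx1 hb0.le
      · rw [hv']
        have h1 : vVal β w / (2 * β) ≤ p.2.2 / (2 * β) := by gcongr
        simp only []
        linarith
      · rw [hlen', hv', htt]
        have h1 : p.2.2 / (2 * β) < (vVal β w + ((2 * β) ^ w.length)⁻¹) / (2 * β) := by gcongr
        rw [add_div] at h1
        simp only []
        linarith
    have hmapsG : Set.MapsTo g (Eset β (w ++ [a])) {p | p ∈ Eset β w ∧ p.1 0 = a} := by
      intro q hq
      have hx0 : (0 : ℝ) ≤ q.2.1 := hq.1.1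
      have hx1 : q.2.1 ≤ rW β (w ++ [a]) := hq.1.2
      have hy0 : vVal β (w ++ [a]) ≤ q.2.2 := hq.2.1
      have hy1 : q.2.2 < vVal β (w ++ [a]) + ((2 * β) ^ (w ++ [a]).length)⁻¹ := hq.2.2
      rw [hrwa] at hx1
      rw [hv'] at hy0
      rw [hv', hlen', htt] at hy1
      refine ⟨⟨⟨?_, ?_⟩, ?_, ?_⟩, ?_⟩
      · exact div_nonneg hx0 hb0.le
      · rw [div_le_iff₀ hb0, mul_comm]; exact hx1
      · have h3 : vVal β w / (2 * β) ≤ q.2.2 - C1 β w a := by linarith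
        have h4 := mul_le_mul_of_nonneg_right h3 h2b.le
        rw [div_mul_cancel₀ _ (ne_of_gt h2b)] at h4
        exact h4
      · have h3 : q.2.2 - C1 β w a < (vVal β w + ((2 * β) ^ w.length)⁻¹) / (2 * β) := by
          rw [add_div]; linarith
        have h4 := mul_lt_mul_of_pos_right h3 h2b
        rw [div_mul_cancel₀ _ (ne_of_gt h2b)] at h4
        exact h4
      · exact consB_zero a q.1
    refine Set.InvOn.bijOn ⟨?_, ?_⟩ hmapsF hmapsG
    · rintro p ⟨hp, hpa⟩
      rw [hpsi p hp hpa, hg]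
      simp only []
      have e1 : consB a (shift p.1) = p.1 := consB_shift hpa
      have e2 : β * p.2.1 / β = p.2.1 := by field_simp
      have e3 : (p.2.2 / (2 * β) + C1 β w a - C1 β w a) * (2 * β) = p.2.2 := by
        field_simp
        try ring
      rw [e1, e2, e3]
    · intro q hq
      have hmem := hmapsG hq
      rw [hpsi _ hmem.1 hmem.2, hg]
      simp only []
      have e1 : shift (consB a q.1) = q.1 := shift_consB a q.1
      have e2 : β * (q.2.1 / β) = q.2.1 := by field_simp
      have e3 : (q.2.2 - C1 β w a) * (2 * β) / (2 * β) + C1 β w a = q.2.2 := by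
        field_simp
        try ring
      rw [e1, e2, e3]
  · -- type T₁
    intro h
    have hd : digitB β (rW β w) a = true := h
    have hrwa : rW β (w ++ [a]) = β * rW β w - 1 := by
      rw [rW_append, rStep, hd]; simp
    have hSR := SR_eq hβ1 hβ2
    have hrle : rW β w ≤ 1 / (β - 1) := (rW_mem hβ1 hβ2 w).2
    have hβinv : β * (1 / β) = 1 := by field_simp
    set g : (ℕ → Bool) × ℝ × ℝ → (ℕ → Bool) × ℝ × ℝ :=
      fun q => (consB a q.1, (q.2.1 + 1) / β, (q.2.2 - C1 β w a) * (2 * β)) with hg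
    have hpsi : ∀ p : (ℕ → Bool) × ℝ × ℝ, p ∈ Eset β w → p.1 0 = a →
        p.2.1 ∈ Sset β ∪ Rset β →
        psi β p = (shift p.1, β * p.2.1 - 1, p.2.2 / (2 * β) + C1 β w a) := by
      intro p hp hpa hpx
      rw [hSR] at hpx
      have hnl : ¬ (p.2.1 < 1 / β) := not_lt.mpr hpx.1
      rw [psi_eq hβ1 hp]
      unfold psiAux
      rw [hpa, hd]
      rw [if_pos rfl, if_neg hnl]
    have hmapsF : Set.MapsTo (psi β)
        {p | p ∈ Eset β w ∧ p.1 0 = a ∧ p.2.1 ∈ Sset β ∪ Rset β} (Eset β (w ++ [a])) := by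
      rintro p ⟨hp, hpa, hpx⟩
      have hx1 : p.2.1 ≤ rW β w := hp.1.2
      have hy0 : vVal β w ≤ p.2.2 := hp.2.1
      have hy1 : p.2.2 < vVal β w + ((2 * β) ^ w.length)⁻¹ := hp.2.2
      have hxl : 1 / β ≤ p.2.1 := by rw [hSR] at hpx; exact hpx.1
      rw [hpsi p hp hpa hpx]
      refine ⟨⟨?_, ?_⟩, ?_, ?_⟩
      · have : β * (1 / β) ≤ β * p.2.1 := by gcongr
        simp only []
        linarith
      · rw [hrwa]
        have : β * p.2.1 ≤ β * rW β w := by gcongr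
        simp only []
        linarith
      · rw [hv']
        have h1 : vVal β w / (2 * β) ≤ p.2.2 / (2 * β) := by gcongr
        simp only []
        linarith
      · rw [hlen', hv', htt]
        have h1 : p.2.2 / (2 * β) < (vVal β w + ((2 * β) ^ w.length)⁻¹) / (2 * β) := by gcongr
        rw [add_div] at h1
        simp only []
        linarith
    have hmapsG : Set.MapsTo g (Eset β (w ++ [a]))
        {p | p ∈ Eset β w ∧ p.1 0 = a ∧ p.2.1 ∈ Sset β ∪ Rset β} := by
      intro q hq
      have hx0 : (0 : ℝ) ≤ q.2.1 := hq.1.1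
      have hx1 : q.2.1 ≤ rW β (w ++ [a]) := hq.1.2
      have hy0 : vVal β (w ++ [a]) ≤ q.2.2 := hq.2.1
      have hy1 : q.2.2 < vVal β (w ++ [a]) + ((2 * β) ^ (w ++ [a]).length)⁻¹ := hq.2.2
      rw [hrwa] at hx1
      rw [hv'] at hy0
      rw [hv', hlen', htt] at hy1
      have hxr : (q.2.1 + 1) / β ≤ rW β w := by
        rw [div_le_iff₀ hb0, mul_comm]
        linarith
      have hxl : 1 / β ≤ (q.2.1 + 1) / β := by gcongr; linarith
      refine ⟨⟨⟨?_, ?_⟩, ?_, ?_⟩, ?_, ?_⟩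
      · positivity
      · exact hxr
      · have h3 : vVal β w / (2 * β) ≤ q.2.2 - C1 β w a := by linarith
        have h4 := mul_le_mul_of_nonneg_right h3 h2b.le
        rw [div_mul_cancel₀ _ (ne_of_gt h2b)] at h4
        exact h4
      · have h3 : q.2.2 - C1 β w a < (vVal β w + ((2 * β) ^ w.length)⁻¹) / (2 * β) := by
          rw [add_div]; linarith
        have h4 := mul_lt_mul_of_pos_right h3 h2b
        rw [div_mul_cancel₀ _ (ne_of_gt h2b)] at h4
        exact h4
      · exact consB_zero a q.1
      · rw [hSR]
        exact ⟨hxl, le_trans hxr hrle⟩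
    refine Set.InvOn.bijOn ⟨?_, ?_⟩ hmapsF hmapsG
    · rintro p ⟨hp, hpa, hpx⟩
      rw [hpsi p hp hpa hpx, hg]
      simp only []
      have e1 : consB a (shift p.1) = p.1 := consB_shift hpa
      have e2 : (β * p.2.1 - 1 + 1) / β = p.2.1 := by field_simp; try ring
      have e3 : (p.2.2 / (2 * β) + C1 β w a - C1 β w a) * (2 * β) = p.2.2 := by
        field_simp
        try ring
      rw [e1, e2, e3]
    · intro q hq
      have hmem := hmapsG hq
      rw [hpsi _ hmem.1 hmem.2.1 hmem.2.2, hg]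
      simp only []
      have e1 : shift (consB a q.1) = q.1 := shift_consB a q.1
      have e2 : β * ((q.2.1 + 1) / β) - 1 = q.2.1 := by field_simp; try ring
      have e3 : (q.2.2 - C1 β w a) * (2 * β) / (2 * β) + C1 β w a = q.2.2 := by
        field_simp
        try ring
      rw [e1, e2, e3]


end RandomBeta
end

section
/- (Parry) Let β > 1 and let T : [0,1] → [0,1] be T(x) = βx − ⌊βx⌋. Then the function d(x) = Σ_{n=0}^∞ β^{−n} χ_{[0, Tⁿ(1)]}(x) satisfies 0 < ∫_0^1 d dλ < ∞, and the probability measure on [0,1] with density d / ∫_0^1 d dλ with respect to Lebesgue measure is T-invariant. -/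
open MeasureTheory Set Filter
open scoped Classical ENNReal

namespace RandomBeta

/-- The greedy β-transformation `T(x) = βx - ⌊βx⌋`. -/
noncomputable def Tgreedy (β x : ℝ) : ℝ := β * x - (⌊β * x⌋ : ℝ)

/-- Parry's function `d(x) = Σ_n β^{-n} χ_{[0, Tⁿ(1)]}(x)`. -/
noncomputable def dParry (β x : ℝ) : ℝ :=
  ∑' n : ℕ, ((β : ℝ) ^ n)⁻¹ * (Set.Icc (0 : ℝ) ((Tgreedy β)^[n] 1)).indicator 1 x

namespace Parry
variable {β : ℝ}

noncomputable def tseq (β : ℝ) (n : ℕ) : ℝ := (Tgreedy β)^[n] 1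

lemma Tg_mem (hβ : 1 < β) (x : ℝ) : Tgreedy β x ∈ Ico (0:ℝ) 1 := by
  have h1 := Int.floor_le (β * x)
  have h2 := Int.lt_floor_add_one (β * x)
  constructor
  · show (0:ℝ) ≤ β * x - (⌊β * x⌋:ℝ); linarith
  · show β * x - (⌊β * x⌋:ℝ) < 1; linarith

lemma tseq_mem (hβ : 1 < β) (n : ℕ) : tseq β n ∈ Icc (0:ℝ) 1 := by
  cases n with
  | zero => simp [tseq]
  | succ n =>
    have : tseq β (n+1) = Tgreedy β (tseq β n) := Function.iterate_succ_apply' _ _ _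
    rw [this]
    exact Icc_subset_Icc_right le_rfl (Ico_subset_Icc_self (Tg_mem hβ _))

lemma tseq_succ (β : ℝ) (n : ℕ) : tseq β (n+1) = Tgreedy β (tseq β n) :=
  Function.iterate_succ_apply' _ _ _

lemma affine_preimage_volume (hβ : 1 < β) (k : ℝ) (S : Set ℝ) :
    volume ((fun x => β * x - k) ⁻¹' S) = ENNReal.ofReal β⁻¹ * volume S := by
  have hb0 : β ≠ 0 := by positivity
  have hcomp : (fun x : ℝ => β * x - k) = (fun y : ℝ => y + (-k)) ∘ (β * ·) := by
    ext x; simp [sub_eq_add_neg]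
  rw [hcomp, Set.preimage_comp, Real.volume_preimage_mul_left hb0,
    measure_preimage_add_right volume (-k) S, abs_of_nonneg (by positivity)]

lemma piece_floor (hβ : 1 < β) {u : ℝ} (hu : u ≤ 1) {k : ℕ} {x : ℝ}
    (h0 : 0 ≤ β * x - (k:ℝ)) (h1 : β * x - (k:ℝ) < u) : ⌊β * x⌋ = (k : ℤ) := by
  rw [Int.floor_eq_iff]
  push_cast
  constructor <;> linarith

lemma branch (hβ : 1 < β) {A : Set ℝ} (hA : MeasurableSet A) {t : ℝ} (ht0 : 0 ≤ t) (ht1 : t ≤ 1) :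
    volume (Tgreedy β ⁻¹' A ∩ Ico 0 t)
      = (⌊β * t⌋.toNat : ℝ≥0∞) * (ENNReal.ofReal β⁻¹ * volume (A ∩ Ico 0 1))
        + ENNReal.ofReal β⁻¹ * volume (A ∩ Ico 0 (Tgreedy β t)) := by
  have hβ0 : (0:ℝ) < β := lt_trans one_pos hβ
  set K := ⌊β * t⌋.toNat with hKdef
  have hbt0 : 0 ≤ β * t := by positivity
  have hKfloor : ((K : ℤ) : ℝ) = (⌊β * t⌋ : ℝ) := by
    exact_mod_cast congrArg (fun z : ℤ => (z : ℝ)) (Int.toNat_of_nonneg (Int.floor_nonneg.2 hbt0))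
  have hKle : (K : ℝ) ≤ β * t := by
    have := Int.floor_le (β * t); push_cast at hKfloor ⊢; linarith
  have hKgt : β * t < (K : ℝ) + 1 := by
    have := Int.lt_floor_add_one (β * t); push_cast at hKfloor ⊢; linarith
  have hTt : Tgreedy β t = β * t - (K : ℝ) := by
    simp only [Tgreedy]; push_cast at hKfloor ⊢; linarith
  set u : ℕ → ℝ := fun k => if k < K then 1 else Tgreedy β t with hu
  have hule : ∀ k, u k ≤ 1 := by
    intro k; simp only [hu]; split
    · exact le_rfl
    · rw [hTt]; linarith
  set f : ℕ → Set ℝ := fun k => (fun x => β * x - (k:ℝ)) ⁻¹' (A ∩ Ico 0 (u k)) with hf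
  have hmemf : ∀ k x, x ∈ f k ↔ (β * x - (k:ℝ)) ∈ A ∧ 0 ≤ β * x - (k:ℝ) ∧ β * x - (k:ℝ) < u k := by
    intro k x; simp [hf, Set.mem_preimage, Set.mem_Ico, and_assoc]
  have hfloorf : ∀ k x, x ∈ f k → ⌊β * x⌋ = (k : ℤ) := by
    intro k x hx
    rcases (hmemf k x).1 hx with ⟨_, h0, h1⟩
    exact piece_floor hβ (hule k) h0 h1
  have hset : Tgreedy β ⁻¹' A ∩ Ico 0 t = ⋃ k ∈ Finset.range (K+1), f k := by
    ext x
    simp only [Set.mem_inter_iff, Set.mem_preimage, Set.mem_Ico, Set.mem_iUnion,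
      Finset.mem_range, exists_prop]
    constructor
    · rintro ⟨hxA, hx0, hxt⟩
      have hbx0 : 0 ≤ β * x := by positivity
      have hj0 : 0 ≤ ⌊β * x⌋ := Int.floor_nonneg.2 hbx0
      have hjle : ⌊β * x⌋ ≤ ⌊β * t⌋ := Int.floor_le_floor (by nlinarith)
      set j := ⌊β * x⌋.toNat with hjdef
      have hjfloor : ((j : ℤ) : ℝ) = (⌊β * x⌋ : ℝ) := by
        exact_mod_cast congrArg (fun z : ℤ => (z : ℝ)) (Int.toNat_of_nonneg hj0)
      have hjR : (j : ℝ) = (⌊β * x⌋ : ℝ) := by push_cast at hjfloor; linarith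
      have hjK : j ≤ K := by
        rw [hjdef, hKdef]; exact Int.toNat_le_toNat hjle
      have hfl := Int.floor_le (β * x)
      have hfl2 := Int.lt_floor_add_one (β * x)
      refine ⟨j, Nat.lt_succ_of_le hjK, ?_⟩
      rw [hmemf]
      refine ⟨by rw [hjR]; exact hxA, by rw [hjR]; linarith, ?_⟩
      by_cases hc : j < K
      · simp only [hu, if_pos hc]; rw [hjR]; linarith
      · have hjK' : j = K := le_antisymm hjK (not_lt.1 hc)
        simp only [hu, if_neg hc, hTt]
        have hbxbt : β * x < β * t := by nlinarith
        rw [hjR]; push_cast at hKfloor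
        rw [hjK'] at hjR
        linarith [hjR]
    · rintro ⟨k, hk, hx⟩
      rcases (hmemf k x).1 hx with ⟨hxA, h0, h1⟩
      have hfl : ⌊β * x⌋ = (k : ℤ) := hfloorf k x hx
      have hTx : Tgreedy β x = β * x - (k : ℝ) := by
        simp only [Tgreedy, hfl]; push_cast; ring
      refine ⟨by rw [hTx]; exact hxA, ?_, ?_⟩
      · nlinarith [Nat.cast_nonneg (α := ℝ) k]
      · have hbxbt : β * x < β * t := by
          by_cases hc : k < K
          · have : (k : ℝ) + 1 ≤ (K : ℝ) := by exact_mod_cast hc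
            have := hule k
            linarith
          · have hkK : (k : ℝ) = (K : ℝ) := by exact_mod_cast (by omega : k = K)
            simp only [hu, if_neg hc, hTt] at h1
            linarith
        exact lt_of_mul_lt_mul_left (by linarith) (le_of_lt hβ0)
  have hdisj : Set.PairwiseDisjoint ↑(Finset.range (K+1)) f := by
    intro i _ j _ hij
    refine Set.disjoint_left.2 fun x hxi hxj => ?_
    have h1 := hfloorf i x hxi
    have h2 := hfloorf j x hxj
    exact hij (Nat.cast_injective (h1.symm.trans h2))
  have hfm : ∀ k ∈ Finset.range (K+1), MeasurableSet (f k) := by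
    intro k _
    exact ((measurable_const.mul measurable_id).sub measurable_const)
      (hA.inter measurableSet_Ico)
  rw [hset, measure_biUnion_finset hdisj hfm]
  have hval : ∀ k, volume (f k) = ENNReal.ofReal β⁻¹ * volume (A ∩ Ico 0 (u k)) := fun k =>
    affine_preimage_volume hβ (k : ℝ) _
  simp only [hval]
  rw [Finset.sum_range_succ]
  have h1 : ∀ k ∈ Finset.range K, ENNReal.ofReal β⁻¹ * volume (A ∩ Ico 0 (u k))
      = ENNReal.ofReal β⁻¹ * volume (A ∩ Ico 0 1) := by
    intro k hk
    rw [Finset.mem_range] at hk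
    simp only [hu, if_pos hk]
  rw [Finset.sum_congr rfl h1, Finset.sum_const, nsmul_eq_mul]
  simp only [hu, lt_irrefl, if_neg (lt_irrefl K)]
  rw [Finset.card_range]

lemma indicator_mem01 (s : Set ℝ) (x : ℝ) :
    s.indicator (1 : ℝ → ℝ) x = 0 ∨ s.indicator 1 x = 1 := by
  by_cases h : x ∈ s <;> simp [Set.indicator_apply, h]

lemma dterm_nonneg (hβ : 1 < β) (n : ℕ) (x : ℝ) :
    0 ≤ ((β : ℝ) ^ n)⁻¹ * (Set.Icc (0 : ℝ) (tseq β n)).indicator 1 x := by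
  have h0 : (0:ℝ) < β := lt_trans one_pos hβ
  by_cases h : x ∈ Set.Icc (0:ℝ) (tseq β n) <;>
    simp [Set.indicator_of_mem, Set.indicator_of_notMem, h] <;> positivity

lemma dterm_le (hβ : 1 < β) (n : ℕ) (x : ℝ) :
    ((β : ℝ) ^ n)⁻¹ * (Set.Icc (0 : ℝ) (tseq β n)).indicator 1 x ≤ (β⁻¹) ^ n := by
  have h0 : (0:ℝ) < β := lt_trans one_pos hβ
  rw [← inv_pow]
  by_cases h : x ∈ Set.Icc (0:ℝ) (tseq β n) <;>
    simp [Set.indicator_of_mem, Set.indicator_of_notMem, h] <;> positivity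
lemma summable_geo (hβ : 1 < β) : Summable (fun n : ℕ => (β⁻¹) ^ n) := by
  have h0 : (0:ℝ) < β := lt_trans one_pos hβ
  exact summable_geometric_of_lt_one (by positivity) (by
    rw [inv_lt_one_iff₀]; right; exact hβ)

lemma summable_dterm (hβ : 1 < β) (x : ℝ) :
    Summable (fun n : ℕ => ((β : ℝ) ^ n)⁻¹ * (Set.Icc (0 : ℝ) (tseq β n)).indicator 1 x) :=
  Summable.of_nonneg_of_le (fun n => dterm_nonneg hβ n x) (fun n => dterm_le hβ n x)
    (summable_geo hβ)

lemma dParry_nonneg (hβ : 1 < β) (x : ℝ) : 0 ≤ dParry β x :=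
  tsum_nonneg (fun n => dterm_nonneg hβ n x)

lemma dParry_le (hβ : 1 < β) (x : ℝ) : dParry β x ≤ (1 - β⁻¹)⁻¹ := by
  have := Summable.tsum_le_tsum (fun n => dterm_le hβ n x) (summable_dterm hβ x) (summable_geo hβ)
  have h0 : (0:ℝ) < β := lt_trans one_pos hβ
  rwa [tsum_geometric_of_lt_one (by positivity)
    (by rw [inv_lt_one_iff₀]; right; exact hβ)] at this

lemma measurable_dParry (hβ : 1 < β) : Measurable (dParry β) := by
  have hterm : ∀ n : ℕ, Measurable (fun x : ℝ =>
      ((β : ℝ) ^ n)⁻¹ * (Set.Icc (0 : ℝ) (tseq β n)).indicator 1 x) := by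
    intro n
    exact (measurable_const.indicator measurableSet_Icc).const_mul _
  have : ∀ N, Measurable (fun x : ℝ => ∑ n ∈ Finset.range N,
      ((β : ℝ) ^ n)⁻¹ * (Set.Icc (0 : ℝ) (tseq β n)).indicator 1 x) := by
    intro N; exact Finset.measurable_sum _ (fun n _ => hterm n)
  apply measurable_of_tendsto_metrizable this
  rw [tendsto_pi_nhds]
  intro x
  exact (summable_dterm hβ x).hasSum.tendsto_sum_nat

lemma Nexpand (hβ : 1 < β) {B : Set ℝ} (hB : MeasurableSet B) :
    ∫⁻ x in B ∩ Icc (0:ℝ) 1, ENNReal.ofReal (dParry β x)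
      = ∑' n : ℕ, ENNReal.ofReal (((β:ℝ) ^ n)⁻¹) * volume (B ∩ Ico 0 (tseq β n)) := by
  have hpt : ∀ x, ENNReal.ofReal (dParry β x)
      = ∑' n : ℕ, ENNReal.ofReal (((β:ℝ)^n)⁻¹ * (Set.Icc (0:ℝ) (tseq β n)).indicator 1 x) :=
    fun x => ENNReal.ofReal_tsum_of_nonneg (fun n => dterm_nonneg hβ n x) (summable_dterm hβ x)
  have hterm : ∀ (n : ℕ) (x : ℝ),
      ENNReal.ofReal (((β:ℝ)^n)⁻¹ * (Set.Icc (0:ℝ) (tseq β n)).indicator 1 x)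
      = (Set.Icc (0:ℝ) (tseq β n)).indicator (fun _ => ENNReal.ofReal (((β:ℝ)^n)⁻¹)) x := by
    intro n x
    by_cases h : x ∈ Set.Icc (0:ℝ) (tseq β n) <;>
      simp [Set.indicator_of_mem, Set.indicator_of_notMem, h]
  calc ∫⁻ x in B ∩ Icc (0:ℝ) 1, ENNReal.ofReal (dParry β x)
      = ∫⁻ x in B ∩ Icc (0:ℝ) 1, ∑' n : ℕ,
          (Set.Icc (0:ℝ) (tseq β n)).indicator (fun _ => ENNReal.ofReal (((β:ℝ)^n)⁻¹)) x := by
        refine lintegral_congr fun x => ?_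
        rw [hpt x]; exact tsum_congr fun n => hterm n x
    _ = ∑' n : ℕ, ∫⁻ x in B ∩ Icc (0:ℝ) 1,
          (Set.Icc (0:ℝ) (tseq β n)).indicator (fun _ => ENNReal.ofReal (((β:ℝ)^n)⁻¹)) x :=
        lintegral_tsum fun n => (measurable_const.indicator measurableSet_Icc).aemeasurable
    _ = ∑' n : ℕ, ENNReal.ofReal (((β:ℝ)^n)⁻¹) * volume (B ∩ Ico 0 (tseq β n)) := by
        refine tsum_congr fun n => ?_
        rw [lintegral_indicator_const measurableSet_Icc,
          Measure.restrict_apply measurableSet_Icc]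
        congr 1
        have hsub : Set.Icc (0:ℝ) (tseq β n) ∩ (B ∩ Set.Icc 0 1) = B ∩ Set.Icc 0 (tseq β n) := by
          have h1 := (tseq_mem hβ n).2
          ext x
          constructor
          · rintro ⟨hx1, hxB, _⟩; exact ⟨hxB, hx1⟩
          · rintro ⟨hxB, hx1⟩; exact ⟨hx1, hxB, hx1.1, le_trans hx1.2 h1⟩
        rw [hsub]
        exact (measure_congr (ae_eq_set_inter (ae_eq_refl B) Ico_ae_eq_Icc)).symm

noncomputable def aseq (β : ℝ) (n : ℕ) : ℕ := ⌊β * tseq β n⌋.toNat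

lemma aseq_cast (hβ : 1 < β) (n : ℕ) : ((aseq β n : ℝ)) = (⌊β * tseq β n⌋ : ℝ) := by
  have h0 : (0:ℝ) < β := lt_trans one_pos hβ
  have h1 := (tseq_mem hβ n).1
  exact_mod_cast congrArg (fun z : ℤ => (z:ℝ))
    (Int.toNat_of_nonneg (Int.floor_nonneg.2 (by positivity)))

lemma tseq_rec (hβ : 1 < β) (n : ℕ) :
    tseq β (n+1) = β * tseq β n - (aseq β n : ℝ) := by
  rw [tseq_succ, aseq_cast hβ]; rfl

lemma partial_digit (hβ : 1 < β) (N : ℕ) :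
    ∑ n ∈ Finset.range N, (aseq β n : ℝ) * ((β:ℝ)^(n+1))⁻¹ = 1 - tseq β N * ((β:ℝ)^N)⁻¹ := by
  have h0 : (0:ℝ) < β := lt_trans one_pos hβ
  induction N with
  | zero => simp [tseq]
  | succ N ih =>
    rw [Finset.sum_range_succ, ih, tseq_rec hβ N]
    have hβn : (β:ℝ)^N ≠ 0 := by positivity
    have hβn1 : (β:ℝ)^(N+1) ≠ 0 := by positivity
    field_simp
    ring

lemma hasSum_digit (hβ : 1 < β) :
    HasSum (fun n : ℕ => (aseq β n : ℝ) * ((β:ℝ)^(n+1))⁻¹) 1 := by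
  have h0 : (0:ℝ) < β := lt_trans one_pos hβ
  rw [hasSum_iff_tendsto_nat_of_nonneg (fun n => by positivity)]
  have h1 : Tendsto (fun N : ℕ => tseq β N * ((β:ℝ)^N)⁻¹) atTop (nhds 0) := by
    have hg : Tendsto (fun N : ℕ => (β⁻¹:ℝ)^N) atTop (nhds 0) :=
      tendsto_pow_atTop_nhds_zero_of_lt_one (by positivity)
        (by rw [inv_lt_one_iff₀]; right; exact hβ)
    refine squeeze_zero (fun N => ?_) (fun N => ?_) hg
    · have := (tseq_mem hβ N).1; positivity
    · rw [← inv_pow]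
      have h2 := (tseq_mem hβ N).2
      have h3 : (0:ℝ) ≤ (β⁻¹:ℝ)^N := by positivity
      nlinarith
  simp only [partial_digit hβ]
  simpa using h1.const_sub 1

lemma digitSum (hβ : 1 < β) :
    ∑' n : ℕ, (aseq β n : ℝ≥0∞) * ENNReal.ofReal (((β:ℝ)^(n+1))⁻¹) = 1 := by
  have h0 : (0:ℝ) < β := lt_trans one_pos hβ
  have h1 : ∀ n : ℕ, (aseq β n : ℝ≥0∞) * ENNReal.ofReal (((β:ℝ)^(n+1))⁻¹)
      = ENNReal.ofReal ((aseq β n : ℝ) * ((β:ℝ)^(n+1))⁻¹) := by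
    intro n
    rw [ENNReal.ofReal_mul (Nat.cast_nonneg _), ENNReal.ofReal_natCast]
  simp only [h1]
  rw [← ENNReal.ofReal_tsum_of_nonneg (fun n => by positivity) (hasSum_digit hβ).summable,
    (hasSum_digit hβ).tsum_eq, ENNReal.ofReal_one]

set_option maxHeartbeats 1000000 in
lemma Ninv (hβ : 1 < β) {A : Set ℝ} (hA : MeasurableSet A) :
    ∫⁻ x in Tgreedy β ⁻¹' A ∩ Icc (0:ℝ) 1, ENNReal.ofReal (dParry β x)
      = ∫⁻ x in A ∩ Icc (0:ℝ) 1, ENNReal.ofReal (dParry β x) := by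
  have h0 : (0:ℝ) < β := lt_trans one_pos hβ
  have hTmeas : Measurable (Tgreedy β) := by
    have h1 : Measurable fun x : ℝ => β * x := measurable_const.mul measurable_id
    exact h1.sub (measurable_from_top.comp h1.floor)
  rw [Nexpand hβ (hTmeas hA), Nexpand hβ hA]
  have hL : ∀ n, volume (Tgreedy β ⁻¹' A ∩ Ico 0 (tseq β n))
      = (aseq β n : ℝ≥0∞) * (ENNReal.ofReal β⁻¹ * volume (A ∩ Ico 0 1))
        + ENNReal.ofReal β⁻¹ * volume (A ∩ Ico 0 (tseq β (n+1))) := by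
    intro n
    rw [tseq_succ]
    exact branch hβ hA (tseq_mem hβ n).1 (tseq_mem hβ n).2
  simp only [hL]
  set L := volume (A ∩ Ico (0:ℝ) 1) with hLdef
  set M : ℕ → ℝ≥0∞ := fun n => volume (A ∩ Ico 0 (tseq β n)) with hM
  set c : ℕ → ℝ≥0∞ := fun n => ENNReal.ofReal (((β:ℝ)^n)⁻¹) with hc
  have hM0 : M 0 = L := by simp only [hM, hLdef]; congr 1
  have hc0 : c 0 = 1 := by simp [hc]
  have hcc : ∀ n, c n * ENNReal.ofReal β⁻¹ = c (n+1) := by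
    intro n
    rw [hc, ← ENNReal.ofReal_mul (by positivity)]
    congr 1
    rw [pow_succ, mul_inv]
  have expand : ∀ n, c n * ((aseq β n : ℝ≥0∞) * (ENNReal.ofReal β⁻¹ * L)
        + ENNReal.ofReal β⁻¹ * M (n+1))
      = (aseq β n : ℝ≥0∞) * c (n+1) * L + c (n+1) * M (n+1) := by
    intro n
    rw [mul_add]
    congr 1
    · rw [← hcc n]; ring
    · rw [← hcc n]; ring
  change ∑' n, c n * ((aseq β n : ℝ≥0∞) * (ENNReal.ofReal β⁻¹ * L)
      + ENNReal.ofReal β⁻¹ * M (n+1)) = ∑' n, c n * M n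
  simp only [expand]
  rw [ENNReal.tsum_add]
  have h1 : ∑' n, (aseq β n : ℝ≥0∞) * c (n+1) * L = L := by
    rw [ENNReal.tsum_mul_right]
    have h2 : ∑' n, (aseq β n : ℝ≥0∞) * c (n+1) = 1 := digitSum hβ
    rw [h2, one_mul]
  rw [h1]
  have h3 : ∑' n, c n * M n = c 0 * M 0 + ∑' n, c (n+1) * M (n+1) :=
    tsum_eq_zero_add' ENNReal.summable
  rw [h3, hc0, hM0, one_mul]

lemma part1 (hβ : 1 < β) : IntegrableOn (dParry β) (Set.Icc (0:ℝ) 1) volume := by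
  refine Integrable.mono' (g := fun _ => (1 - β⁻¹)⁻¹) (integrableOn_const ?_)
    (measurable_dParry hβ).aestronglyMeasurable (ae_of_all _ fun x => ?_)
  · rw [Real.volume_Icc]; exact ENNReal.ofReal_ne_top
  · rw [Real.norm_eq_abs, abs_of_nonneg (dParry_nonneg hβ x)]
    exact dParry_le hβ x

lemma part2 (hβ : 1 < β) : 0 < ∫ x in Set.Icc (0:ℝ) 1, dParry β x := by
  have hint : IntegrableOn (dParry β) (Set.Icc (0:ℝ) 1) volume := part1 hβ
  have h1 : ∀ x ∈ Set.Icc (0:ℝ) 1, (1:ℝ) ≤ dParry β x := by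
    intro x hx
    have h0 := Summable.le_tsum (summable_dterm hβ x) 0 (fun n _ => dterm_nonneg hβ n x)
    have h2 : ((β:ℝ)^0)⁻¹ * (Set.Icc (0:ℝ) (tseq β 0)).indicator 1 x = 1 := by
      have ht0 : tseq β 0 = 1 := rfl
      rw [ht0, pow_zero, inv_one, one_mul, Set.indicator_of_mem hx]
      rfl
    rw [h2] at h0
    exact h0
  have h3 := setIntegral_mono_on
    (integrableOn_const (by rw [Real.volume_Icc]; exact ENNReal.ofReal_ne_top))
    hint measurableSet_Icc h1
  rw [setIntegral_const] at h3
  rw [Real.volume_real_Icc] at h3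
  simp at h3
  linarith

end Parry

/-- Parry: `0 < ∫_0^1 d dλ < ∞` (finiteness as integrability), and the
probability measure on `[0,1]` with density `d / ∫ d` is `T`-invariant. -/
theorem stmt16 (β : ℝ) (hβ : 1 < β) :
    MeasureTheory.IntegrableOn (dParry β) (Set.Icc (0 : ℝ) 1) volume ∧
    0 < ∫ x in Set.Icc (0 : ℝ) 1, dParry β x ∧
    ∀ A : Set ℝ, MeasurableSet A →
      ((volume.restrict (Set.Icc (0 : ℝ) 1)).withDensity
          (fun x => ENNReal.ofReal (dParry β x / ∫ y in Set.Icc (0 : ℝ) 1, dParry β y)))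
        (Tgreedy β ⁻¹' A)
      = ((volume.restrict (Set.Icc (0 : ℝ) 1)).withDensity
          (fun x => ENNReal.ofReal (dParry β x / ∫ y in Set.Icc (0 : ℝ) 1, dParry β y))) A := by
  refine ⟨Parry.part1 hβ, Parry.part2 hβ, ?_⟩
  intro A hA
  have hTmeas : Measurable (Tgreedy β) := by
    have h1 : Measurable fun x : ℝ => β * x := measurable_const.mul measurable_id
    exact h1.sub (measurable_from_top.comp h1.floor)
  have hApre : MeasurableSet (Tgreedy β ⁻¹' A) := hTmeas hA
  rw [withDensity_apply _ hApre, withDensity_apply _ hA,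
    Measure.restrict_restrict hApre, Measure.restrict_restrict hA]
  have hpt : ∀ x, ENNReal.ofReal (dParry β x / ∫ y in Set.Icc (0:ℝ) 1, dParry β y)
      = ENNReal.ofReal (dParry β x) * ENNReal.ofReal ((∫ y in Set.Icc (0:ℝ) 1, dParry β y)⁻¹) := by
    intro x
    rw [div_eq_mul_inv, ENNReal.ofReal_mul (Parry.dParry_nonneg hβ x)]
  simp only [hpt]
  rw [lintegral_mul_const' _ _ ENNReal.ofReal_ne_top,
    lintegral_mul_const' _ _ ENNReal.ofReal_ne_top]
  congr 1
  exact Parry.Ninv hβ hA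

end RandomBeta
end
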